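/- arXiv:2104.06659 — 9 statements merged into one kernel-verified Lean document; each statement's English description precedes it below -/
import Mathlib

section
/- Let M be nonsingular with M* = M (or more generally an orthosymmetric matrix), and let A ∈ K^{n×n} be M-self-adjoint (i.e., M⁻¹A*M = A) with no purely imaginary eigenvalues. Then sign(A) = A(A²)^{-1/2}, and the canonical generalized polar decomposition A = WS with respect to M exists and satisfies W = sign(A). -/
open Matrix

open Polynomial

lemma spectrum_iff_root {n : ℕ} (B : Matrix (Fin n) (Fin n) ℂ) (μ : ℂ) :
    μ ∈ spectrum ℂ B ↔ B.charpoly.IsRoot μ := by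
  rw [spectrum.mem_iff, IsRoot, Matrix.charpoly, _root_.eval_det, matPolyEquiv_charmatrix,
    eval_sub, eval_X, eval_C, Matrix.isUnit_iff_isUnit_det]
  have h1 : (algebraMap ℂ (Matrix (Fin n) (Fin n) ℂ)) μ = Matrix.scalar (Fin n) μ := by
    ext i j
    simp [Algebra.algebraMap_eq_smul_one, Matrix.scalar, Matrix.one_apply, Matrix.diagonal,
      Matrix.smul_apply]
  rw [h1]
  simp [isUnit_iff_ne_zero, not_not]

lemma matrix_isUnit_of_spectrum {n : ℕ} {B : Matrix (Fin n) (Fin n) ℂ}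
    (h : (0 : ℂ) ∉ spectrum ℂ B) : IsUnit B := by
  by_contra hc
  exact h ((spectrum.zero_mem_iff (R := ℂ)).mpr hc)

lemma aeval_comm {n : ℕ} {P Q X : Matrix (Fin n) (Fin n) ℂ} (h : P * X = X * Q)
    (p : ℂ[X]) : (aeval P p) * X = X * (aeval Q p) := by
  have hpow : ∀ k : ℕ, P ^ k * X = X * Q ^ k := by
    intro k
    induction k with
    | zero => simp
    | succ k ih =>
      rw [pow_succ, pow_succ, mul_assoc, h, ← mul_assoc, ih, mul_assoc]
  induction p using Polynomial.induction_on' with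
  | add p q hp hq => simp [map_add, add_mul, mul_add, hp, hq]
  | monomial k a =>
    rw [aeval_monomial, aeval_monomial, mul_assoc, hpow, ← mul_assoc, ← mul_assoc,
      Algebra.commutes]

/-- Uniqueness of the matrix square root with spectrum in the open right half-plane. -/
lemma sqrt_unique {n : ℕ} {P Q : Matrix (Fin n) (Fin n) ℂ}
    (hsq : P * P = Q * Q)
    (hP : ∀ μ ∈ spectrum ℂ P, 0 < μ.re) (hQ : ∀ μ ∈ spectrum ℂ Q, 0 < μ.re) :
    P = Q := by
  rcases Nat.eq_zero_or_pos n with hn | hn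
  · subst hn; exact Subsingleton.elim _ _
  haveI : NeZero n := ⟨hn.ne'⟩
  set X := P - Q with hX
  have hcomm : P * X = X * (-Q) := by
    calc P * X = P * P - P * Q := by rw [hX]; noncomm_ring
      _ = Q * Q - P * Q := by rw [hsq]
      _ = X * (-Q) := by rw [hX]; noncomm_ring
  have key := aeval_comm hcomm P.charpoly
  rw [Matrix.aeval_self_charpoly, zero_mul] at key
  have hunit : IsUnit (aeval (-Q) P.charpoly) := by
    apply matrix_isUnit_of_spectrum
    have hdeg : 0 < P.charpoly.degree := by
      rw [Matrix.charpoly_degree_eq_dim]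
      exact_mod_cast by simpa [Fintype.card_fin] using hn
    rw [spectrum.map_polynomial_aeval_of_degree_pos _ _ hdeg]
    rintro ⟨μ, hμ, hev⟩
    have hμP : μ ∈ spectrum ℂ P := (spectrum_iff_root P μ).mpr hev
    have h1 : 0 < μ.re := hP μ hμP
    have h2 : -μ ∈ spectrum ℂ Q := by
      rw [← spectrum.neg_eq, Set.mem_neg] at hμ
      exact hμ
    have := hQ _ h2
    simp only [Complex.neg_re] at this
    linarith
  rcases hunit with ⟨u, hu⟩
  have h2 : X * (aeval (-Q) P.charpoly) * (↑u⁻¹ : Matrix (Fin n) (Fin n) ℂ) = 0 := by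
    rw [← key, zero_mul]
  rw [← hu, Units.mul_inv_cancel_right] at h2
  exact sub_eq_zero.mp h2

lemma spectrum_conj {n : ℕ} {M : Matrix (Fin n) (Fin n) ℂ} (B : Matrix (Fin n) (Fin n) ℂ)
    (hM : IsUnit M.det) : spectrum ℂ (M⁻¹ * B * M) = spectrum ℂ B := by
  ext μ
  rw [spectrum.mem_iff, spectrum.mem_iff, Matrix.isUnit_iff_isUnit_det,
    Matrix.isUnit_iff_isUnit_det]
  have h1 : algebraMap ℂ (Matrix (Fin n) (Fin n) ℂ) μ - M⁻¹ * B * M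
      = M⁻¹ * (algebraMap ℂ (Matrix (Fin n) (Fin n) ℂ) μ - B) * M := by
    rw [mul_sub, sub_mul]
    congr 1
    rw [mul_assoc, Algebra.commutes, ← mul_assoc, Matrix.nonsing_inv_mul M hM, one_mul]
  rw [h1, Matrix.det_mul, Matrix.det_mul, Matrix.det_nonsing_inv]
  have hd : M.det ≠ 0 := hM.ne_zero
  simp [isUnit_iff_ne_zero, Ring.inverse_eq_inv', hd]

lemma spectrum_conjTranspose {n : ℕ} (B : Matrix (Fin n) (Fin n) ℂ) (μ : ℂ) :
    μ ∈ spectrum ℂ Bᴴ ↔ (starRingEnd ℂ) μ ∈ spectrum ℂ B := by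
  rw [spectrum.mem_iff, spectrum.mem_iff, Matrix.isUnit_iff_isUnit_det,
    Matrix.isUnit_iff_isUnit_det]
  have h1 : algebraMap ℂ (Matrix (Fin n) (Fin n) ℂ) μ - Bᴴ
      = (algebraMap ℂ (Matrix (Fin n) (Fin n) ℂ) ((starRingEnd ℂ) μ) - B)ᴴ := by
    rw [Matrix.conjTranspose_sub]
    congr 1
    ext i j
    by_cases h : i = j <;>
      simp [Algebra.algebraMap_eq_smul_one, Matrix.one_apply, Matrix.conjTranspose_apply, h,
        eq_comm]
  rw [h1, Matrix.det_conjTranspose]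
  simp [isUnit_iff_ne_zero]


/-- If `M` is nonsingular Hermitian and `A` is `M`-self-adjoint with no
purely imaginary eigenvalues, then, with `T` the principal square root of `A²`
(so that `sign A = A * T⁻¹`), the canonical generalized polar decomposition of `A`
with respect to `M` exists with polar factor `W = sign A = A (A²)^{-1/2}` and
self-adjoint factor `S = T = (A²)^{1/2}`. -/
theorem sign_eq_generalized_polar_factor {n : ℕ}
    (M A T : Matrix (Fin n) (Fin n) ℂ)
    (hM : IsUnit M.det) (hMh : Mᴴ = M)
    (hA : M⁻¹ * Aᴴ * M = A)
    (hspec : ∀ lam ∈ spectrum ℂ A, lam.re ≠ 0)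
    -- `T` is the principal square root of `A²`
    (hT : T * T = A * A)
    (hTspec : ∀ mu ∈ spectrum ℂ T, 0 < mu.re) :
    -- `W := A * T⁻¹ = A (A²)^{-1/2} = sign A` and `S := T` form the canonical
    -- generalized polar decomposition of `A` with respect to `M`:
    A = (A * T⁻¹) * T ∧
    M⁻¹ * (A * T⁻¹)ᴴ * M * (A * T⁻¹) = 1 ∧
    M⁻¹ * Tᴴ * M = T := by
  have hTunit : IsUnit T := matrix_isUnit_of_spectrum (fun h0 => by
    simpa using hTspec 0 h0)
  have hTdet : IsUnit T.det := (Matrix.isUnit_iff_isUnit_det T).mp hTunit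
  have hTinv : T⁻¹ * T = 1 := Matrix.nonsing_inv_mul T hTdet
  have hTinv' : T * T⁻¹ = 1 := Matrix.mul_nonsing_inv T hTdet
  have hMinv : M⁻¹ * M = 1 := Matrix.nonsing_inv_mul M hM
  have hMinv' : M * M⁻¹ = 1 := Matrix.mul_nonsing_inv M hM
  -- the M-adjoint of T
  set T' := M⁻¹ * Tᴴ * M with hT'def
  have hT'sq : T' * T' = T * T := by
    calc T' * T' = M⁻¹ * Tᴴ * (M * M⁻¹) * Tᴴ * M := by
          simp only [hT'def, Matrix.mul_assoc]
      _ = M⁻¹ * (T * T)ᴴ * M := by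
          rw [hMinv', Matrix.mul_one, Matrix.conjTranspose_mul]
          simp only [Matrix.mul_assoc]
      _ = M⁻¹ * (A * A)ᴴ * M := by rw [hT]
      _ = (M⁻¹ * Aᴴ * M) * (M⁻¹ * Aᴴ * M) := by
          rw [Matrix.conjTranspose_mul]
          calc M⁻¹ * (Aᴴ * Aᴴ) * M = M⁻¹ * Aᴴ * (M * M⁻¹) * Aᴴ * M := by
                rw [hMinv', Matrix.mul_one]; simp only [Matrix.mul_assoc]
            _ = (M⁻¹ * Aᴴ * M) * (M⁻¹ * Aᴴ * M) := by simp only [Matrix.mul_assoc]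
      _ = A * A := by rw [hA]
      _ = T * T := hT.symm
  have hT'spec : ∀ μ ∈ spectrum ℂ T', 0 < μ.re := by
    intro μ hμ
    rw [hT'def, spectrum_conj _ hM, spectrum_conjTranspose] at hμ
    have := hTspec _ hμ
    simpa using this
  have h3 : T = T' := sqrt_unique hT'sq.symm hTspec hT'spec
  refine ⟨?_, ?_, h3.symm⟩
  · rw [Matrix.mul_assoc, hTinv, Matrix.mul_one]
  · have eT : Tᴴ = M * T * M⁻¹ := by
      calc Tᴴ = (M * M⁻¹) * Tᴴ * (M * M⁻¹) := by
            rw [hMinv', Matrix.one_mul, Matrix.mul_one]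
        _ = M * (M⁻¹ * Tᴴ * M) * M⁻¹ := by simp only [Matrix.mul_assoc]
        _ = M * T * M⁻¹ := by rw [← hT'def, ← h3]
    have e2 : (Tᴴ)⁻¹ = M * T⁻¹ * M⁻¹ := by
      rw [eT, Matrix.mul_inv_rev, Matrix.mul_inv_rev, Matrix.nonsing_inv_nonsing_inv M hM]
      simp only [Matrix.mul_assoc]
    calc M⁻¹ * (A * T⁻¹)ᴴ * M * (A * T⁻¹)
        = M⁻¹ * ((Tᴴ)⁻¹ * Aᴴ) * M * (A * T⁻¹) := by
          rw [Matrix.conjTranspose_mul, Matrix.conjTranspose_nonsing_inv]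
      _ = M⁻¹ * (M * T⁻¹ * M⁻¹ * Aᴴ) * M * (A * T⁻¹) := by rw [e2]
      _ = (M⁻¹ * M) * (T⁻¹ * ((M⁻¹ * Aᴴ * M) * (A * T⁻¹))) := by
          simp only [Matrix.mul_assoc]
      _ = T⁻¹ * (A * (A * T⁻¹)) := by
          rw [hMinv, hA, Matrix.one_mul]
      _ = (T⁻¹ * (A * A)) * T⁻¹ := by simp only [Matrix.mul_assoc]
      _ = (T⁻¹ * (T * T)) * T⁻¹ := by rw [hT]
      _ = 1 := by rw [← Matrix.mul_assoc T⁻¹ T T, hTinv, Matrix.one_mul, hTinv']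
end

section
/- Let Σ be a signature matrix and suppose A*ΣA = L D L* where L is unit lower triangular and D is a nonsingular real diagonal matrix. Define R = |D|^{1/2} L* and Σ̂ = sign(D) (the diagonal matrix of signs of D's entries). Then A*ΣA = R* Σ̂ R, R is upper triangular and nonsingular, and H := A R⁻¹ satisfies H*ΣH = Σ̂ and A = HR. -/
open Matrix

/-- A signature matrix: diagonal with entries `±1`. -/
def IsSignatureMatrix {k : ℕ} (S : Matrix (Fin k) (Fin k) ℂ) : Prop :=
  ∃ d : Fin k → ℝ, (∀ i, d i = 1 ∨ d i = -1) ∧ S = Matrix.diagonal fun i => (d i : ℂ)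

/-- From a diagonal `LDLᴴ` factorization `Aᴴ Σ A = L D Lᴴ` with unit
lower triangular `L` and nonsingular real diagonal `D`, setting `R = |D|^{1/2} Lᴴ`
and `Σ̂ = sign D`, we get `Aᴴ Σ A = Rᴴ Σ̂ R`, `R` upper triangular and nonsingular,
and `H := A R⁻¹` satisfies `Hᴴ Σ H = Σ̂` and `A = H R`. -/
theorem ldl_gives_indefinite_qr {m n : ℕ}
    (Sig : Matrix (Fin m) (Fin m) ℂ) (hSig : IsSignatureMatrix Sig)
    (A : Matrix (Fin m) (Fin n) ℂ)
    (L : Matrix (Fin n) (Fin n) ℂ) (d : Fin n → ℝ)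
    (hLdiag : ∀ i, L i i = 1)
    (hLlow : ∀ i j : Fin n, i < j → L i j = 0)
    (hd : ∀ i, d i ≠ 0)
    (hLDL : Aᴴ * Sig * A = L * Matrix.diagonal (fun i => (d i : ℂ)) * Lᴴ) :
    let R : Matrix (Fin n) (Fin n) ℂ :=
      Matrix.diagonal (fun i => (Real.sqrt |d i| : ℂ)) * Lᴴ
    let SigHat : Matrix (Fin n) (Fin n) ℂ :=
      Matrix.diagonal (fun i => ((d i / |d i| : ℝ) : ℂ))
    Aᴴ * Sig * A = Rᴴ * SigHat * R ∧
    (∀ i j : Fin n, j < i → R i j = 0) ∧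
    IsUnit R.det ∧
    (A * R⁻¹)ᴴ * Sig * (A * R⁻¹) = SigHat ∧
    A = (A * R⁻¹) * R := by
  intro R SigHat
  have hsq : ∀ i, (Real.sqrt |d i| : ℂ) ≠ 0 := fun i =>
    Complex.ofReal_ne_zero.mpr (Real.sqrt_ne_zero'.mpr (abs_pos.mpr (hd i)))
  have hRconj : Rᴴ = L * Matrix.diagonal (fun i => (Real.sqrt |d i| : ℂ)) := by
    show ((Matrix.diagonal fun i => (Real.sqrt |d i| : ℂ)) * Lᴴ)ᴴ = _
    rw [conjTranspose_mul, conjTranspose_conjTranspose, diagonal_conjTranspose]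
    rw [show (star fun i => ((Real.sqrt |d i| : ℝ) : ℂ)) =
        (fun i => ((Real.sqrt |d i| : ℝ) : ℂ)) from funext fun i => by
      rw [Pi.star_apply, RCLike.star_def, Complex.conj_ofReal]]
  have hscal : ∀ i, (Real.sqrt |d i| : ℂ) * ((d i / |d i| : ℝ) : ℂ) * (Real.sqrt |d i| : ℂ)
      = (d i : ℂ) := by
    intro i
    have h : Real.sqrt |d i| * (d i / |d i|) * Real.sqrt |d i| = d i := by
      rw [mul_comm, ← mul_assoc, Real.mul_self_sqrt (abs_nonneg _), mul_comm,
        div_mul_eq_mul_div, mul_div_assoc, div_self (abs_ne_zero.mpr (hd i)), mul_one]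
    exact_mod_cast h
  have hkey : Rᴴ * SigHat * R = L * Matrix.diagonal (fun i => (d i : ℂ)) * Lᴴ := by
    rw [hRconj]
    show L * _ * Matrix.diagonal _ * (Matrix.diagonal _ * Lᴴ) = _
    rw [Matrix.mul_assoc (L * _), ← Matrix.mul_assoc (Matrix.diagonal _),
      diagonal_mul_diagonal, Matrix.mul_assoc L, ← Matrix.mul_assoc (Matrix.diagonal _),
      diagonal_mul_diagonal, ← Matrix.mul_assoc]
    have hdd : (Matrix.diagonal fun i => (Real.sqrt |d i| : ℂ) *
        (((d i / |d i| : ℝ) : ℂ) * (Real.sqrt |d i| : ℂ))) =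
        Matrix.diagonal fun i => (d i : ℂ) :=
      congrArg Matrix.diagonal (funext fun i => by rw [← mul_assoc]; exact hscal i)
    rw [hdd]
  have hfac : Aᴴ * Sig * A = Rᴴ * SigHat * R := by rw [hkey, hLDL]
  have hupper : ∀ i j : Fin n, j < i → R i j = 0 := by
    intro i j hji
    show ((Matrix.diagonal fun i => (Real.sqrt |d i| : ℂ)) * Lᴴ) i j = 0
    rw [diagonal_mul]
    simp [conjTranspose_apply, hLlow j i hji]
  have hRdiag : ∀ i, R i i = (Real.sqrt |d i| : ℂ) := by
    intro i
    show ((Matrix.diagonal fun i => (Real.sqrt |d i| : ℂ)) * Lᴴ) i i = _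
    rw [diagonal_mul]
    simp [conjTranspose_apply, hLdiag i]
  have hRdet : IsUnit R.det := by
    have hbt : R.BlockTriangular id := fun i j h => hupper i j h
    rw [Matrix.det_of_upperTriangular hbt]
    simp only [id, hRdiag]
    exact isUnit_iff_ne_zero.mpr (Finset.prod_ne_zero_iff.mpr fun i _ => hsq i)
  have hRinv : R * R⁻¹ = 1 := mul_nonsing_inv R hRdet
  have hRinv' : R⁻¹ * R = 1 := nonsing_inv_mul R hRdet
  refine ⟨hfac, hupper, hRdet, ?_, ?_⟩
  · calc (A * R⁻¹)ᴴ * Sig * (A * R⁻¹)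
        = R⁻¹ᴴ * (Aᴴ * Sig * A) * R⁻¹ := by
          rw [conjTranspose_mul A R⁻¹]; simp only [Matrix.mul_assoc]
      _ = R⁻¹ᴴ * (Rᴴ * SigHat * R) * R⁻¹ := by rw [hfac]
      _ = (R * R⁻¹)ᴴ * SigHat * (R * R⁻¹) := by
          rw [conjTranspose_mul R R⁻¹]; simp only [Matrix.mul_assoc]
      _ = SigHat := by rw [hRinv]; simp
  · rw [Matrix.mul_assoc, hRinv', Matrix.mul_one]
end

section
/- Let M ∈ K^{m×m}, N ∈ K^{n×n} be nonsingular, M₂ = diag(M, N), X ∈ K^{m×n}, η ∈ K. Suppose [ηX; I] = VR with V = [V₁; V₂] ∈ K^{(m+n)×n} and R ∈ K^{n×n} nonsingular, and suppose I + |η|² X⋆X is invertible where X⋆ = N⁻¹X*M. Then ηX (I + |η|² X⋆X)⁻¹ = V₁ (V^{⋆_{M₂,N}} V)⁻¹ V₂^{⋆_N}, where V^{⋆_{M₂,N}} = N⁻¹V*M₂ and V₂^{⋆_N} = N⁻¹V₂*N. -/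
open Matrix

/-- If `[ηX; I] = V R` with `R` nonsingular, and `I + |η|² X⋆X` is
invertible (with `X⋆ = N⁻¹ Xᴴ M`), then
`ηX (I + |η|² X⋆X)⁻¹ = V₁ (V^{⋆_{M₂,N}} V)⁻¹ V₂^{⋆_N}`. -/
theorem gen_qr_iteration_lemma {m n : ℕ}
    (M : Matrix (Fin m) (Fin m) ℂ) (N : Matrix (Fin n) (Fin n) ℂ)
    (hM : IsUnit M.det) (hN : IsUnit N.det)
    (X : Matrix (Fin m) (Fin n) ℂ) (η : ℂ)
    (V₁ : Matrix (Fin m) (Fin n) ℂ) (V₂ R : Matrix (Fin n) (Fin n) ℂ)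
    (hR : IsUnit R.det)
    (htop : η • X = V₁ * R)
    (hbot : (1 : Matrix (Fin n) (Fin n) ℂ) = V₂ * R)
    (hinv : IsUnit (1 + ((Complex.normSq η : ℝ) : ℂ) • (N⁻¹ * Xᴴ * M * X)).det) :
    (η • X) * (1 + ((Complex.normSq η : ℝ) : ℂ) • (N⁻¹ * Xᴴ * M * X))⁻¹ =
      V₁ *
        (N⁻¹ * (Matrix.fromRows V₁ V₂)ᴴ * Matrix.fromBlocks M 0 0 N *
            Matrix.fromRows V₁ V₂)⁻¹ *
        (N⁻¹ * V₂ᴴ * N) := by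
  set c : ℂ := ((Complex.normSq η : ℝ) : ℂ) with hc
  set S : Matrix (Fin n) (Fin n) ℂ := 1 + c • (N⁻¹ * Xᴴ * M * X) with hS
  have hRR : R * R⁻¹ = 1 := Matrix.mul_nonsing_inv R hR
  have hRR' : R⁻¹ * R = 1 := Matrix.nonsing_inv_mul R hR
  have hNN : N * N⁻¹ = 1 := Matrix.mul_nonsing_inv N hN
  have hNN' : N⁻¹ * N = 1 := Matrix.nonsing_inv_mul N hN
  have hSS : S * S⁻¹ = 1 := Matrix.mul_nonsing_inv S hinv
  have hRH : Rᴴ * (Rᴴ)⁻¹ = 1 := by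
    apply Matrix.mul_nonsing_inv
    rw [Matrix.det_conjTranspose]
    exact hR.star
  have hRH' : (Rᴴ)⁻¹ * Rᴴ = 1 := by
    apply Matrix.nonsing_inv_mul
    rw [Matrix.det_conjTranspose]
    exact hR.star
  have hV₂ : V₂ = R⁻¹ := by
    rw [← Matrix.mul_one V₂, ← hRR, ← Matrix.mul_assoc, ← hbot, Matrix.one_mul]
  have hV₁ : V₁ = (η • X) * R⁻¹ := by
    rw [htop, Matrix.mul_assoc, hRR, Matrix.mul_one]
  -- Compute the Gram matrix
  have hgram : (Matrix.fromRows V₁ V₂)ᴴ * Matrix.fromBlocks M 0 0 N *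
      Matrix.fromRows V₁ V₂ = V₁ᴴ * M * V₁ + V₂ᴴ * N * V₂ := by
    rw [Matrix.conjTranspose_fromRows_eq_fromCols_conjTranspose,
      Matrix.fromCols_mul_fromBlocks, Matrix.fromCols_mul_fromRows]
    simp [Matrix.mul_assoc]
  have hcη : c = η * star η := by
    rw [hc, ← Complex.mul_conj]; rfl
  have hkey : V₁ᴴ * M * V₁ + V₂ᴴ * N * V₂ = (Rᴴ)⁻¹ * (N * S) * R⁻¹ := by
    have hV₁H : V₁ᴴ = (Rᴴ)⁻¹ * (star η • Xᴴ) := by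
      rw [hV₁, Matrix.conjTranspose_mul, Matrix.conjTranspose_nonsing_inv,
        Matrix.conjTranspose_smul]
    have hV₂H : V₂ᴴ = (Rᴴ)⁻¹ := by
      rw [hV₂, Matrix.conjTranspose_nonsing_inv]
    rw [hV₁H, hV₂H, hV₁, hV₂, hS]
    have hNS : N * (1 + c • (N⁻¹ * Xᴴ * M * X)) = N + c • (Xᴴ * M * X) := by
      rw [Matrix.mul_add, Matrix.mul_one, Matrix.mul_smul,
        show N * (N⁻¹ * Xᴴ * M * X) = (N * N⁻¹) * (Xᴴ * M * X) by
          simp [Matrix.mul_assoc], hNN, Matrix.one_mul]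
    rw [hNS, Matrix.mul_add, Matrix.add_mul, add_comm]
    congr 1
    rw [hcη]
    simp only [Matrix.smul_mul, Matrix.mul_smul, smul_smul, Matrix.mul_assoc]
  have hWinv : (N⁻¹ * (Matrix.fromRows V₁ V₂)ᴴ * Matrix.fromBlocks M 0 0 N *
      Matrix.fromRows V₁ V₂)⁻¹ = R * S⁻¹ * N⁻¹ * Rᴴ * N := by
    apply Matrix.inv_eq_right_inv
    have heq : N⁻¹ * (Matrix.fromRows V₁ V₂)ᴴ * Matrix.fromBlocks M 0 0 N *
        Matrix.fromRows V₁ V₂ = N⁻¹ * ((Rᴴ)⁻¹ * (N * S) * R⁻¹) := by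
      simp only [Matrix.mul_assoc] at hgram hkey ⊢
      rw [hgram, hkey]
    rw [heq]
    calc N⁻¹ * ((Rᴴ)⁻¹ * (N * S) * R⁻¹) * (R * S⁻¹ * N⁻¹ * Rᴴ * N)
        = N⁻¹ * ((Rᴴ)⁻¹ * (N * ((S * (R⁻¹ * R)) * S⁻¹) * N⁻¹) * Rᴴ) * N := by
          simp only [Matrix.mul_assoc]
      _ = 1 := by rw [hRR', Matrix.mul_one, hSS, Matrix.mul_one, hNN,
          Matrix.mul_one, hRH', Matrix.mul_one, hNN']
  rw [hWinv, hV₁, hV₂, Matrix.conjTranspose_nonsing_inv]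
  symm
  calc η • X * R⁻¹ * (R * S⁻¹ * N⁻¹ * Rᴴ * N) * (N⁻¹ * (Rᴴ)⁻¹ * N)
      = η • X * ((R⁻¹ * R) * S⁻¹ * N⁻¹ * ((Rᴴ * (N * N⁻¹)) * (Rᴴ)⁻¹) * N) := by
        simp only [Matrix.mul_assoc]
    _ = η • X * S⁻¹ := by rw [hRR', Matrix.one_mul, hNN, Matrix.mul_one, hRH,
        Matrix.mul_one, Matrix.mul_assoc S⁻¹, hNN', Matrix.mul_one]
end

section
/- Let Σ_n, Σ_m be signature matrices, X ∈ K^{m×n}, η ∈ K, and a, b, c nonzero scalars with c ≠ 0 and Σ_n + c X*Σ_m X invertible. Then X(aI + b Σ_n X*Σ_m X)(I + c Σ_n X*Σ_m X)⁻¹ = (b/c) X + (a − b/c) X (Σ_n + c X*Σ_m X)⁻¹ Σ_n. -/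
open Matrix

theorem sig_sq {k : ℕ} {S : Matrix (Fin k) (Fin k) ℂ} (h : IsSignatureMatrix S) :
    S * S = 1 := by
  obtain ⟨d, hd, rfl⟩ := h
  rw [Matrix.diagonal_mul_diagonal]
  ext i j
  rcases hd i with h | h <;>
    simp [Matrix.diagonal_apply, Matrix.one_apply, h]

/-- The algebraic rewrite underlying the LDLᵀ-based ΣDWH iteration:
`X(aI + b Σₙ Xᴴ Σₘ X)(I + c Σₙ Xᴴ Σₘ X)⁻¹
  = (b/c) X + (a − b/c) X (Σₙ + c Xᴴ Σₘ X)⁻¹ Σₙ`. -/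
theorem sigma_dwh_rewrite {m n : ℕ}
    (Sigm : Matrix (Fin m) (Fin m) ℂ) (Sign : Matrix (Fin n) (Fin n) ℂ)
    (hSigm : IsSignatureMatrix Sigm) (hSign : IsSignatureMatrix Sign)
    (X : Matrix (Fin m) (Fin n) ℂ) (a b c : ℂ)
    (ha : a ≠ 0) (hb : b ≠ 0) (hc : c ≠ 0)
    (hinv : IsUnit (Sign + c • (Xᴴ * Sigm * X)).det) :
    X * (a • (1 : Matrix (Fin n) (Fin n) ℂ) + b • (Sign * Xᴴ * Sigm * X)) *
        (1 + c • (Sign * Xᴴ * Sigm * X))⁻¹ =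
      (b / c) • X + (a - b / c) • (X * (Sign + c • (Xᴴ * Sigm * X))⁻¹ * Sign) := by
  have hS2 := sig_sq hSign
  set W := Sign * Xᴴ * Sigm * X with hW
  have hfact : (1 : Matrix (Fin n) (Fin n) ℂ) + c • W =
      Sign * (Sign + c • (Xᴴ * Sigm * X)) := by
    rw [Matrix.mul_add, hS2, Matrix.mul_smul, hW]
    simp [Matrix.mul_assoc]
  have hSinv : Sign⁻¹ = Sign := Matrix.inv_eq_right_inv hS2
  have hSdet : IsUnit Sign.det :=
    IsUnit.of_mul_eq_one _ (by rw [← Matrix.det_mul, hS2, Matrix.det_one])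
  have hAdet : IsUnit ((1 : Matrix (Fin n) (Fin n) ℂ) + c • W).det := by
    rw [hfact, Matrix.det_mul]; exact hSdet.mul hinv
  have hinvfact : ((1 : Matrix (Fin n) (Fin n) ℂ) + c • W)⁻¹ =
      (Sign + c • (Xᴴ * Sigm * X))⁻¹ * Sign := by
    rw [hfact, Matrix.mul_inv_rev, hSinv]
  have hdecomp : a • (1 : Matrix (Fin n) (Fin n) ℂ) + b • W =
      (b / c) • ((1 : Matrix (Fin n) (Fin n) ℂ) + c • W) + (a - b / c) • 1 := by
    rw [smul_add, smul_smul, div_mul_cancel₀ _ hc]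
    module
  rw [hdecomp, Matrix.mul_add, Matrix.add_mul, Matrix.mul_smul, Matrix.mul_smul,
    Matrix.smul_mul, Matrix.smul_mul, Matrix.mul_assoc X,
    Matrix.mul_nonsing_inv _ hAdet, Matrix.mul_one, hinvfact]
  simp [Matrix.mul_assoc]
end

section
/- Let A ∈ K^{n×n} and let Q₁, Q₂ ∈ K^{n×n} be unitary. Assume Q₁A*Q₂A has no eigenvalues on the negative real axis so that its principal square root exists. Then every eigenvalue λ of (Q₁A*Q₂A)^{1/2} satisfies σ_min(A) ≤ |λ| ≤ σ_max(A), where σ_min, σ_max denote the smallest and largest singular values of A. -/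
open Matrix

/-- The singular values of `A`: square roots of the eigenvalues of `Aᴴ A`. -/
noncomputable def singularValue {n : ℕ} (A : Matrix (Fin n) (Fin n) ℂ) (i : Fin n) : ℝ :=
  Real.sqrt ((Matrix.isHermitian_conjTranspose_mul_self A).eigenvalues i)

section Helpers

open scoped Matrix.Norms.L2Operator

variable {n : ℕ}

noncomputable instance matrixCStar : CStarAlgebra (Matrix (Fin n) (Fin n) ℂ) :=
  letI : CompleteSpace (Matrix (Fin n) (Fin n) ℂ) := FiniteDimensional.complete ℂ _
  Matrix.instCStarAlgebra

/-- Norm bound for a self-adjoint matrix from a bound on its complex spectrum. -/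
lemma norm_le_of_spectrum_le (B : Matrix (Fin n) (Fin n) ℂ) (hB : IsSelfAdjoint B)
    {c : ℝ} (hc : 0 ≤ c) (h : ∀ z ∈ spectrum ℂ B, ‖z‖ ≤ c) : ‖B‖ ≤ c := by
  have h1 : spectralRadius ℂ B ≤ ENNReal.ofReal c := by
    rw [spectralRadius]
    refine iSup₂_le fun z hz => ?_
    rw [← enorm_eq_nnnorm, ← ofReal_norm]
    exact ENNReal.ofReal_le_ofReal (h z hz)
  rw [← hB.toReal_spectralRadius_complex_eq_norm]
  calc (spectralRadius ℂ B).toReal ≤ (ENNReal.ofReal c).toReal :=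
        ENNReal.toReal_mono ENNReal.ofReal_ne_top h1
    _ = c := ENNReal.toReal_ofReal hc

/-- Every complex spectral value of a Hermitian matrix is (the coercion of) an eigenvalue. -/
lemma mem_spectrum_herm {B : Matrix (Fin n) (Fin n) ℂ} (hB : B.IsHermitian)
    {z : ℂ} (hz : z ∈ spectrum ℂ B) : ∃ i, z = (hB.eigenvalues i : ℂ) := by
  have hre : z = z.re := hB.isSelfAdjoint.mem_spectrum_eq_re hz
  have : (algebraMap ℝ ℂ) z.re ∈ spectrum ℂ B := by
    simpa [Complex.coe_algebraMap] using hre ▸ hz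
  have hzre : (z.re : ℝ) ∈ spectrum ℝ B := (spectrum.algebraMap_mem_iff ℂ).mp this
  rw [hB.spectrum_real_eq_range_eigenvalues] at hzre
  obtain ⟨i, hi⟩ := hzre
  exact ⟨i, by rw [hre, ← hi]⟩

end Helpers

set_option maxHeartbeats 1000000 in
/-- For unitary `Q₁, Q₂`, every eigenvalue `λ` of the principal square
root `T` of `Q₁ Aᴴ Q₂ A` satisfies `σ_min(A) ≤ |λ| ≤ σ_max(A)`. -/
theorem sqrt_eigenvalue_bounds {n : ℕ} (hn : 0 < n)
    (A Q₁ Q₂ T : Matrix (Fin n) (Fin n) ℂ)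
    (hQ₁ : Q₁ ∈ Matrix.unitaryGroup (Fin n) ℂ)
    (hQ₂ : Q₂ ∈ Matrix.unitaryGroup (Fin n) ℂ)
    -- `Q₁ Aᴴ Q₂ A` has no eigenvalues on the negative real axis
    (hneg : ∀ mu ∈ spectrum ℂ (Q₁ * Aᴴ * Q₂ * A), ¬(mu.im = 0 ∧ mu.re < 0))
    -- `T` is the principal square root of `Q₁ Aᴴ Q₂ A`
    (hT : T * T = Q₁ * Aᴴ * Q₂ * A)
    (hTspec : ∀ mu ∈ spectrum ℂ T, 0 ≤ mu.re) :
    ∀ lam ∈ spectrum ℂ T,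
      haveI : Nonempty (Fin n) := Fin.pos_iff_nonempty.mp hn
      (Finset.univ.inf' Finset.univ_nonempty (singularValue A)) ≤ ‖lam‖ ∧
        ‖lam‖ ≤ Finset.univ.sup' Finset.univ_nonempty (singularValue A) := by
  haveI : Nonempty (Fin n) := Fin.pos_iff_nonempty.mp hn
  open scoped Matrix.Norms.L2Operator in
  intro lam hlam
  classical
  set B : Matrix (Fin n) (Fin n) ℂ := Aᴴ * A with hBdef
  have hB : B.IsHermitian := Matrix.isHermitian_conjTranspose_mul_self A
  have hμ0 : ∀ i, 0 ≤ hB.eigenvalues i := fun i =>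
    Matrix.eigenvalues_conjTranspose_mul_self_nonneg A i
  set sMax : ℝ := Finset.univ.sup' Finset.univ_nonempty (singularValue A) with hsMax
  set sMin : ℝ := Finset.univ.inf' Finset.univ_nonempty (singularValue A) with hsMin
  have hsv : ∀ i, singularValue A i = Real.sqrt (hB.eigenvalues i) := fun i => rfl
  have hsMax0 : 0 ≤ sMax := by
    obtain ⟨i⟩ := (inferInstance : Nonempty (Fin n))
    exact le_trans (Real.sqrt_nonneg _)
      (by rw [hsMax, ← hsv i]; exact Finset.le_sup' _ (Finset.mem_univ i))
  -- eigenvalue bound: μ i ≤ sMax ^ 2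
  have hμ_le : ∀ i, hB.eigenvalues i ≤ sMax ^ 2 := by
    intro i
    have h1 : singularValue A i ≤ sMax := Finset.le_sup' _ (Finset.mem_univ i)
    have := Real.sq_sqrt (hμ0 i)
    calc hB.eigenvalues i = (Real.sqrt (hB.eigenvalues i)) ^ 2 := this.symm
      _ ≤ sMax ^ 2 := by
          apply pow_le_pow_left₀ (Real.sqrt_nonneg _)
          rw [← hsv i]; exact h1
  -- Norm bound: ‖B‖ ≤ sMax ^ 2
  have hBnorm : ‖B‖ ≤ sMax ^ 2 := by
    apply norm_le_of_spectrum_le B hB.isSelfAdjoint (by positivity)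
    intro z hz
    obtain ⟨i, rfl⟩ := mem_spectrum_herm hB hz
    have : ‖((hB.eigenvalues i : ℝ) : ℂ)‖ = |hB.eigenvalues i| := by
      simp [Complex.norm_real]
    rw [this, abs_of_nonneg (hμ0 i)]
    exact hμ_le i
  -- ‖A‖ ≤ sMax
  have hAnorm : ‖A‖ ≤ sMax := by
    have h2 : ‖A‖ * ‖A‖ ≤ sMax ^ 2 := by
      rw [← Matrix.l2_opNorm_conjTranspose_mul_self A]; exact hBnorm
    nlinarith [norm_nonneg A, hsMax0]
  set P : Matrix (Fin n) (Fin n) ℂ := Q₁ * Aᴴ * Q₂ * A with hPdef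
  -- λ² ∈ spectrum P
  have hlam2 : lam ^ 2 ∈ spectrum ℂ P := by
    have hsub := spectrum.subset_polynomial_aeval T ((Polynomial.X : Polynomial ℂ) ^ 2)
    have hmem : lam ^ 2 ∈ (fun k => Polynomial.eval k ((Polynomial.X : Polynomial ℂ) ^ 2)) ''
        spectrum ℂ T := ⟨lam, hlam, by simp⟩
    have := hsub hmem
    rw [map_pow, Polynomial.aeval_X] at this
    rwa [show T ^ 2 = P by rw [sq, hT]] at this
  -- Upper bound: ‖P‖ ≤ ‖A‖²
  have hPnorm : ‖P‖ ≤ sMax ^ 2 := by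
    have e1 : P = Q₁ * (Aᴴ * (Q₂ * A)) := by rw [hPdef]; simp only [mul_assoc]
    rw [e1, CStarRing.norm_mem_unitary_mul _ hQ₁]
    calc ‖Aᴴ * (Q₂ * A)‖ ≤ ‖Aᴴ‖ * ‖Q₂ * A‖ := Matrix.l2_opNorm_mul _ _
      _ = ‖A‖ * ‖A‖ := by
          rw [Matrix.l2_opNorm_conjTranspose, CStarRing.norm_mem_unitary_mul _ hQ₂]
      _ ≤ sMax * sMax := mul_le_mul hAnorm hAnorm (norm_nonneg _) hsMax0
      _ = sMax ^ 2 := (sq sMax).symm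
  have hupper : ‖lam‖ ≤ sMax := by
    have h1 : ‖lam ^ 2‖ ≤ sMax ^ 2 := le_trans (spectrum.norm_le_norm_of_mem hlam2) hPnorm
    have h2 : (‖lam‖) ^ 2 ≤ sMax ^ 2 := by
      rwa [norm_pow] at h1
    nlinarith [norm_nonneg lam, hsMax0]
  refine ⟨?_, hupper⟩
  -- Lower bound
  rcases le_or_gt sMin 0 with hm | hm
  · exact le_trans hm (norm_nonneg _)
  -- sMin > 0 : all eigenvalues ≥ sMin², A invertible
  have hμ_ge : ∀ i, sMin ^ 2 ≤ hB.eigenvalues i := by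
    intro i
    have h1 : sMin ≤ singularValue A i := Finset.inf'_le _ (Finset.mem_univ i)
    calc sMin ^ 2 ≤ (singularValue A i) ^ 2 := pow_le_pow_left₀ hm.le h1 2
      _ = hB.eigenvalues i := by rw [hsv i, Real.sq_sqrt (hμ0 i)]
  have hdetB : IsUnit B := by
    rw [Matrix.isUnit_iff_isUnit_det, hB.det_eq_prod_eigenvalues, isUnit_iff_ne_zero]
    exact Finset.prod_ne_zero_iff.mpr fun i _ =>
      Complex.ofReal_ne_zero.mpr (ne_of_gt (lt_of_lt_of_le (by positivity) (hμ_ge i)))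
  have hdetA : IsUnit A := by
    rw [Matrix.isUnit_iff_isUnit_det]
    rw [Matrix.isUnit_iff_isUnit_det, hBdef, Matrix.det_mul] at hdetB
    exact isUnit_of_mul_isUnit_right hdetB
  have hQ₁u : IsUnit Q₁ := ⟨Unitary.toUnits ⟨Q₁, hQ₁⟩, rfl⟩
  have hQ₂u : IsUnit Q₂ := ⟨Unitary.toUnits ⟨Q₂, hQ₂⟩, rfl⟩
  have hPu : IsUnit P := ((hQ₁u.mul (hdetA.star : IsUnit Aᴴ)).mul hQ₂u).mul hdetA
  -- λ² ≠ 0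
  have hlam2ne : lam ^ 2 ≠ 0 := by
    intro h0
    exact (spectrum.zero_notMem_iff ℂ).mpr hPu (h0 ▸ hlam2)
  -- spectrum of the inverse
  have hinvmem : (lam ^ 2)⁻¹ ∈ spectrum ℂ P⁻¹ := by
    have h1 : ((Units.mk0 (lam ^ 2) hlam2ne : ℂˣ) : ℂ) ∈ spectrum ℂ ((hPu.unit : _) : Matrix (Fin n) (Fin n) ℂ) := by
      simpa [IsUnit.unit_spec] using hlam2
    have h2 := spectrum.inv_mem_iff.mp h1
    simpa [Matrix.coe_units_inv] using h2
  -- ‖B⁻¹‖ ≤ (sMin²)⁻¹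
  have hBinv_sa : IsSelfAdjoint (B⁻¹) := by
    have : (B⁻¹)ᴴ = B⁻¹ := by rw [Matrix.conjTranspose_nonsing_inv, hB.eq]
    exact this
  have hBu : IsUnit B := hdetB
  have hBinvnorm : ‖B⁻¹‖ ≤ (sMin ^ 2)⁻¹ := by
    apply norm_le_of_spectrum_le _ hBinv_sa (by positivity)
    intro z hz
    have hzu : z ≠ 0 := by
      intro h0
      have : IsUnit (B⁻¹) := by
        simpa [Matrix.coe_units_inv, IsUnit.unit_spec] using (hBu.unit⁻¹).isUnit
      exact (spectrum.zero_notMem_iff ℂ).mpr this (h0 ▸ hz)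
    have h1 : ((Units.mk0 z hzu : ℂˣ) : ℂ) ∈
        spectrum ℂ (((hBu.unit⁻¹ : _) : Matrix (Fin n) (Fin n) ℂ)) := by
      simpa [Matrix.coe_units_inv, IsUnit.unit_spec] using hz
    have h2 := spectrum.inv_mem_iff.mp h1
    have h3 : z⁻¹ ∈ spectrum ℂ B := by simpa [IsUnit.unit_spec] using h2
    obtain ⟨i, hi⟩ := mem_spectrum_herm hB h3
    have hzeq : z = ((hB.eigenvalues i : ℂ))⁻¹ := by rw [← hi, inv_inv]
    rw [hzeq, norm_inv, Complex.norm_real, Real.norm_eq_abs, abs_of_nonneg (hμ0 i)]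
    exact inv_anti₀ (by positivity) (hμ_ge i)
  -- ‖P⁻¹‖ ≤ ‖B⁻¹‖
  have hPinvnorm : ‖P⁻¹‖ ≤ (sMin ^ 2)⁻¹ := by
    have hQ1inv : Q₁⁻¹ = star Q₁ := Matrix.inv_eq_left_inv (Unitary.star_mul_self_of_mem hQ₁)
    have hQ2inv : Q₂⁻¹ = star Q₂ := Matrix.inv_eq_left_inv (Unitary.star_mul_self_of_mem hQ₂)
    have e1 : P⁻¹ = A⁻¹ * (Q₂⁻¹ * ((Aᴴ)⁻¹ * Q₁⁻¹)) := by
      rw [hPdef, Matrix.mul_inv_rev, Matrix.mul_inv_rev, Matrix.mul_inv_rev]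
    have hAinv_ct : ‖(Aᴴ)⁻¹‖ = ‖A⁻¹‖ := by
      rw [← Matrix.conjTranspose_nonsing_inv, Matrix.l2_opNorm_conjTranspose]
    have hBinv_eq : ‖A⁻¹‖ * ‖A⁻¹‖ = ‖B⁻¹‖ := by
      have e2 : B⁻¹ = (A⁻¹ᴴ)ᴴ * A⁻¹ᴴ := by
        rw [Matrix.conjTranspose_conjTranspose, Matrix.conjTranspose_nonsing_inv,
          hBdef, Matrix.mul_inv_rev]
      rw [e2, Matrix.l2_opNorm_conjTranspose_mul_self, Matrix.l2_opNorm_conjTranspose]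
    calc ‖P⁻¹‖ ≤ ‖A⁻¹‖ * ‖Q₂⁻¹ * ((Aᴴ)⁻¹ * Q₁⁻¹)‖ := by rw [e1]; exact Matrix.l2_opNorm_mul _ _
      _ = ‖A⁻¹‖ * ‖(Aᴴ)⁻¹ * Q₁⁻¹‖ := by
          rw [hQ2inv, CStarRing.norm_mem_unitary_mul _ (Unitary.star_mem hQ₂)]
      _ = ‖A⁻¹‖ * ‖(Aᴴ)⁻¹‖ := by
          rw [hQ1inv, CStarRing.norm_mul_mem_unitary _ (Unitary.star_mem hQ₁)]
      _ = ‖B⁻¹‖ := by rw [hAinv_ct, hBinv_eq]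
      _ ≤ (sMin ^ 2)⁻¹ := hBinvnorm
  -- conclude
  have hfin : ‖(lam ^ 2)⁻¹‖ ≤ (sMin ^ 2)⁻¹ :=
    le_trans (spectrum.norm_le_norm_of_mem hinvmem) hPinvnorm
  have h4 : (‖lam‖ ^ 2)⁻¹ ≤ (sMin ^ 2)⁻¹ := by
    rwa [norm_inv, norm_pow] at hfin
  have h5 : sMin ^ 2 ≤ ‖lam‖ ^ 2 := by
    have habs : 0 < ‖lam‖ ^ 2 := by
      have : lam ≠ 0 := fun h => hlam2ne (by simp [h])
      exact pow_pos (norm_pos_iff.mpr this) 2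
    exact (inv_le_inv₀ habs (by positivity)).mp h4
  nlinarith [norm_nonneg lam, hm]
end

section
/- Let M, N ∈ K^{n×n} be nonsingular with N M-orthogonal (N^{⋆_M}N = I, i.e., M⁻¹N*MN = I), M₂ = diag(M,M), X ∈ K^{n×n}, η ∈ K. Suppose [N; ηX] = VR with V = [V₁;V₂] ∈ K^{2n×n}, R nonsingular, and I + |η|²X^{⋆_M}X invertible. Then ηX(I + |η|²X^{⋆_M}X)⁻¹ = V₂ (V^{⋆_{M₂,M}}V)⁻¹ V₁^{⋆_M} N. -/
open Matrix

/-- With `N` `M`-orthogonal (`M⁻¹ Nᴴ M N = I`), if `[N; ηX] = V R` with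
`R` nonsingular and `I + |η|² X^{⋆_M} X` invertible, then
`ηX (I + |η|² X^{⋆_M} X)⁻¹ = V₂ (V^{⋆_{M₂,M}} V)⁻¹ V₁^{⋆_M} N`. -/
theorem gen_qr_iteration_lemma_swapped {n : ℕ}
    (M N : Matrix (Fin n) (Fin n) ℂ)
    (hM : IsUnit M.det) (hN : IsUnit N.det)
    (hNorth : M⁻¹ * Nᴴ * M * N = 1)
    (X : Matrix (Fin n) (Fin n) ℂ) (η : ℂ)
    (V₁ V₂ R : Matrix (Fin n) (Fin n) ℂ)
    (hR : IsUnit R.det)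
    (htop : N = V₁ * R)
    (hbot : η • X = V₂ * R)
    (hinv : IsUnit (1 + ((Complex.normSq η : ℝ) : ℂ) • (M⁻¹ * Xᴴ * M * X)).det) :
    (η • X) * (1 + ((Complex.normSq η : ℝ) : ℂ) • (M⁻¹ * Xᴴ * M * X))⁻¹ =
      V₂ *
        (M⁻¹ * (Matrix.fromRows V₁ V₂)ᴴ * Matrix.fromBlocks M 0 0 M *
            Matrix.fromRows V₁ V₂)⁻¹ *
        (M⁻¹ * V₁ᴴ * M) * N := by
  set c : ℂ := ((Complex.normSq η : ℝ) : ℂ) with hc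
  set S : Matrix (Fin n) (Fin n) ℂ := 1 + c • (M⁻¹ * Xᴴ * M * X) with hS
  have hMi : M * M⁻¹ = 1 := mul_nonsing_inv M hM
  have hMi' : M⁻¹ * M = 1 := nonsing_inv_mul M hM
  have hRi : R * R⁻¹ = 1 := mul_nonsing_inv R hR
  have hRi' : R⁻¹ * R = 1 := nonsing_inv_mul R hR
  have hRH : IsUnit Rᴴ.det := by rw [det_conjTranspose]; exact hR.star
  have hRHi : Rᴴ * (Rᴴ)⁻¹ = 1 := mul_nonsing_inv _ hRH
  have hRHi' : (Rᴴ)⁻¹ * Rᴴ = 1 := nonsing_inv_mul _ hRH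
  have hSi : S * S⁻¹ = 1 := mul_nonsing_inv S hinv
  have hSi' : S⁻¹ * S = 1 := nonsing_inv_mul S hinv
  -- N is M-orthogonal: Nᴴ M N = M
  have hNMN : Nᴴ * M * N = M := by
    have := congrArg (fun A => M * A) hNorth
    simpa [← mul_assoc, hMi, mul_one] using this.symm |>.symm
  -- key computation of the Gram matrix
  have hGram : (fromRows V₁ V₂)ᴴ * fromBlocks M 0 0 M * fromRows V₁ V₂
      = V₁ᴴ * M * V₁ + V₂ᴴ * M * V₂ := by
    rw [conjTranspose_fromRows_eq_fromCols_conjTranspose,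
      fromCols_mul_fromBlocks, fromCols_mul_fromRows]
    simp [mul_assoc]
  have hV1 : V₁ = N * R⁻¹ := by
    rw [htop, mul_assoc, hRi, mul_one]
  have hV2 : V₂ = (η • X) * R⁻¹ := by
    rw [hbot, mul_assoc, hRi, mul_one]
  have hsum : V₁ᴴ * M * V₁ + V₂ᴴ * M * V₂ = (Rᴴ)⁻¹ * (M * S) * R⁻¹ := by
    have h1 : V₁ᴴ * M * V₁ = (Rᴴ)⁻¹ * (Nᴴ * M * N) * R⁻¹ := by
      rw [hV1]
      simp only [conjTranspose_mul, conjTranspose_nonsing_inv]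
      noncomm_ring
    have h2 : V₂ᴴ * M * V₂ = (Rᴴ)⁻¹ * (c • (Xᴴ * M * X)) * R⁻¹ := by
      have hcc1 : (starRingEnd ℂ) η * η = c := by
        rw [hc]; simp [Complex.normSq_eq_conj_mul_self]
      have hcc2 : η * (starRingEnd ℂ) η = c := by rw [mul_comm]; exact hcc1
      rw [hV2]
      simp only [conjTranspose_mul, conjTranspose_smul, conjTranspose_nonsing_inv,
        Matrix.smul_mul, Matrix.mul_smul, smul_smul, hcc1, hcc2, Matrix.mul_assoc,
        RCLike.star_def]
    have hMS : M * S = Nᴴ * M * N + c • (Xᴴ * M * X) := by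
      rw [hS, hNMN, Matrix.mul_add, mul_one, Matrix.mul_smul]
      congr 1
      rw [show M * (M⁻¹ * Xᴴ * M * X) = (M * M⁻¹) * (Xᴴ * M * X) by noncomm_ring, hMi, one_mul]
    rw [h1, h2, hMS]
    noncomm_ring
  -- invert the Gram expression
  have hWinv : (M⁻¹ * (fromRows V₁ V₂)ᴴ * fromBlocks M 0 0 M * fromRows V₁ V₂)⁻¹
      = R * S⁻¹ * M⁻¹ * Rᴴ * M := by
    have hW : M⁻¹ * (fromRows V₁ V₂)ᴴ * fromBlocks M 0 0 M * fromRows V₁ V₂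
        = M⁻¹ * ((Rᴴ)⁻¹ * (M * S) * R⁻¹) := by
      calc M⁻¹ * (fromRows V₁ V₂)ᴴ * fromBlocks M 0 0 M * fromRows V₁ V₂
          = M⁻¹ * ((fromRows V₁ V₂)ᴴ * fromBlocks M 0 0 M * fromRows V₁ V₂) := by
            simp only [Matrix.mul_assoc]
        _ = _ := by rw [hGram, hsum]
    rw [hW]
    apply inv_eq_right_inv
    calc M⁻¹ * ((Rᴴ)⁻¹ * (M * S) * R⁻¹) * (R * S⁻¹ * M⁻¹ * Rᴴ * M)
        = M⁻¹ * ((Rᴴ)⁻¹ * (M * ((S * (R⁻¹ * R)) * S⁻¹) * M⁻¹) * Rᴴ) * M := by noncomm_ring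
      _ = 1 := by rw [hRi', mul_one, hSi, mul_one, hMi, mul_one, hRHi', mul_one, hMi']
  rw [hWinv, hV2]
  symm
  calc (η • X) * R⁻¹ * (R * S⁻¹ * M⁻¹ * Rᴴ * M) * (M⁻¹ * V₁ᴴ * M) * N
      = (η • X) * (R⁻¹ * R) * S⁻¹ * M⁻¹ * (Rᴴ * ((M * M⁻¹) * V₁ᴴ)) * M * N := by noncomm_ring
    _ = (η • X) * S⁻¹ * M⁻¹ * (V₁ * R)ᴴ * M * N := by
        rw [hRi', hMi, mul_one, one_mul, conjTranspose_mul]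
    _ = (η • X) * S⁻¹ * (M⁻¹ * Nᴴ * M * N) := by rw [← htop]; noncomm_ring
    _ = (η • X) * S⁻¹ := by rw [hNorth, mul_one]
end

section
/- Let Σ ∈ ℝ^{n×n} be a signature matrix, Σ₂ = diag(Σ,Σ), X ∈ K^{n×n} with ΣX*Σ = X (Σ-self-adjoint), η ∈ K. Suppose [Σ; ηX] = (Πᵀ[I; X̂]) R for some symplectic swap matrix Π, Hermitian X̂ = X̂*, and nonsingular R, and suppose Σ + X̂ΣX̂ is invertible. Then ηX(I + |η|²ΣX*ΣX)⁻¹ = V₂ (Σ + X̂ΣX̂)⁻¹ V₁*, where [V₁;V₂] = Πᵀ[I;X̂]. -/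
open Matrix

/-- Permuted Lagrangian graph bases in the ΣDWH iteration: if
`[Σ; ηX] = (Πᵀ [I; X̂]) R` with `Π` a symplectic swap, `X̂` Hermitian, `R`
nonsingular and `Σ + X̂ Σ X̂` invertible, then
`ηX (I + |η|² Σ Xᴴ Σ X)⁻¹ = V₂ (Σ + X̂ Σ X̂)⁻¹ V₁ᴴ` where `[V₁;V₂] = Πᵀ [I; X̂]`. -/
theorem plg_iteration_lemma {n : ℕ}
    (Sig : Matrix (Fin n) (Fin n) ℂ) (hSig : IsSignatureMatrix Sig)
    (X Xhat : Matrix (Fin n) (Fin n) ℂ) (η : ℂ)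
    (hX : Sig * Xᴴ * Sig = X) (hXhat : Xhatᴴ = Xhat)
    (v : Fin n → ℝ) (hv : ∀ i, v i = 0 ∨ v i = 1)
    (V₁ V₂ R : Matrix (Fin n) (Fin n) ℂ) (hR : IsUnit R.det)
    (hV : Matrix.fromRows V₁ V₂ =
      (Matrix.fromBlocks (Matrix.diagonal fun i => (v i : ℂ))
          (Matrix.diagonal fun i => ((1 - v i : ℝ) : ℂ))
          (-(Matrix.diagonal fun i => ((1 - v i : ℝ) : ℂ)))
          (Matrix.diagonal fun i => (v i : ℂ)))ᵀ *
        Matrix.fromRows 1 Xhat)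
    (hVR : Matrix.fromRows Sig (η • X) = Matrix.fromRows V₁ V₂ * R)
    (hinv : IsUnit (Sig + Xhat * Sig * Xhat).det) :
    (η • X) * (1 + ((Complex.normSq η : ℝ) : ℂ) • (Sig * Xᴴ * Sig * X))⁻¹ =
      V₂ * (Sig + Xhat * Sig * Xhat)⁻¹ * V₁ᴴ := by
  obtain ⟨d, hd, rfl⟩ := hSig
  set S : Matrix (Fin n) (Fin n) ℂ := Matrix.diagonal (fun i => (d i : ℂ)) with hSdef
  set D : Matrix (Fin n) (Fin n) ℂ := Matrix.diagonal (fun i => (v i : ℂ)) with hDdef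
  set E : Matrix (Fin n) (Fin n) ℂ := Matrix.diagonal (fun i => ((1 - v i : ℝ) : ℂ)) with hEdef
  -- extract blocks
  replace hV : Matrix.fromRows V₁ V₂ =
      @HMul.hMul _ _ _ Matrix.instHMulOfFintypeOfMulOfAddCommMonoid
        (Matrix.fromBlocks (Matrix.diagonal fun i => (v i : ℂ))
          (Matrix.diagonal fun i => ((1 - v i : ℝ) : ℂ))
          (-(Matrix.diagonal fun i => ((1 - v i : ℝ) : ℂ)))
          (Matrix.diagonal fun i => (v i : ℂ)))ᵀ
        (Matrix.fromRows 1 Xhat) := hV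
  rw [Matrix.fromBlocks_transpose, Matrix.transpose_neg, Matrix.diagonal_transpose,
    Matrix.diagonal_transpose, Matrix.fromBlocks_mul_fromRows] at hV
  simp only [Matrix.mul_one, Matrix.neg_mul, ← sub_eq_add_neg] at hV
  rw [Matrix.fromRows_ext_iff] at hV
  obtain ⟨hV1, hV2⟩ := hV
  rw [← hDdef, ← hEdef] at hV1 hV2
  rw [Matrix.fromRows_mul, Matrix.fromRows_ext_iff] at hVR
  obtain ⟨hSR, hYR⟩ := hVR
  have diag_congr : ∀ (f g : Fin n → ℂ), (∀ i, f i = g i) → Matrix.diagonal f = Matrix.diagonal g :=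
    fun f g h => congrArg _ (funext h)
  -- basic facts about S, D, E
  have hSS : S * S = 1 := by
    rw [hSdef, Matrix.diagonal_mul_diagonal, ← Matrix.diagonal_one]
    exact diag_congr _ _ fun i => by rcases hd i with h | h <;> simp [h]
  have hSH : Sᴴ = S := by
    rw [hSdef, Matrix.diagonal_conjTranspose]
    exact diag_congr _ _ fun i => by simp [Complex.star_def, Complex.conj_ofReal]
  have hDH : Dᴴ = D := by
    rw [hDdef, Matrix.diagonal_conjTranspose]
    exact diag_congr _ _ fun i => by simp [Complex.star_def, Complex.conj_ofReal]
  have hEH : Eᴴ = E := by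
    rw [hEdef, Matrix.diagonal_conjTranspose]
    exact diag_congr _ _ fun i => by simp [Complex.star_def, Complex.conj_ofReal]
  have hDSD : D * S * D = S * D := by
    rw [hDdef, hSdef, Matrix.diagonal_mul_diagonal, Matrix.diagonal_mul_diagonal,
      Matrix.diagonal_mul_diagonal]
    exact diag_congr _ _ fun i => by rcases hv i with h | h <;> simp [h]
  have hDSE : D * S * E = 0 := by
    rw [hDdef, hSdef, hEdef, Matrix.diagonal_mul_diagonal, Matrix.diagonal_mul_diagonal,
      ← Matrix.diagonal_zero]
    exact diag_congr _ _ fun i => by rcases hv i with h | h <;> simp [h]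
  have hESD : E * S * D = 0 := by
    rw [hDdef, hSdef, hEdef, Matrix.diagonal_mul_diagonal, Matrix.diagonal_mul_diagonal,
      ← Matrix.diagonal_zero]
    exact diag_congr _ _ fun i => by rcases hv i with h | h <;> simp [h]
  have hESE : E * S * E = S * E := by
    rw [hEdef, hSdef, Matrix.diagonal_mul_diagonal, Matrix.diagonal_mul_diagonal,
      Matrix.diagonal_mul_diagonal]
    exact diag_congr _ _ fun i => by rcases hv i with h | h <;> simp [h]
  have hDE1 : D + E = 1 := by
    rw [hDdef, hEdef, Matrix.diagonal_add, ← Matrix.diagonal_one]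
    exact diag_congr _ _ fun i => by push_cast; ring
  -- conjugate transposes of V₁, V₂
  have hV1H : V₁ᴴ = D - Xhat * E := by
    rw [hV1, Matrix.conjTranspose_sub, Matrix.conjTranspose_mul, hDH, hEH, hXhat]
  have hV2H : V₂ᴴ = E + Xhat * D := by
    rw [hV2, Matrix.conjTranspose_add, Matrix.conjTranspose_mul, hDH, hEH, hXhat]
  -- the key identity V₁ᴴ S V₁ + V₂ᴴ S V₂ = S + Xhat S Xhat
  set W : Matrix (Fin n) (Fin n) ℂ := S + Xhat * S * Xhat with hWdef
  have hW : V₁ᴴ * S * V₁ + V₂ᴴ * S * V₂ = W := by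
    rw [hV1H, hV2H, hV1, hV2]
    have e1 : (D - Xhat * E) * S * (D - E * Xhat)
        = D * S * D - (D * S * E) * Xhat - Xhat * (E * S * D) + Xhat * (E * S * E) * Xhat := by
      noncomm_ring
    have e2 : (E + Xhat * D) * S * (E + D * Xhat)
        = E * S * E + (E * S * D) * Xhat + Xhat * (D * S * E) + Xhat * (D * S * D) * Xhat := by
      noncomm_ring
    rw [e1, e2, hDSD, hDSE, hESD, hESE, hWdef]
    have : S * D + S * E = S := by rw [← Matrix.mul_add, hDE1, Matrix.mul_one]
    calc S * D - 0 * Xhat - Xhat * 0 + Xhat * (S * E) * Xhat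
          + (S * E + 0 * Xhat + Xhat * 0 + Xhat * (S * D) * Xhat)
        = (S * D + S * E) + Xhat * (S * D + S * E) * Xhat := by noncomm_ring
      _ = W := by rw [this, hWdef]
  -- transfer through R
  have hc : ((Complex.normSq η : ℝ) : ℂ) = (starRingEnd ℂ) η * η := Complex.normSq_eq_conj_mul_self
  have hRWR : Rᴴ * W * R = S + ((Complex.normSq η : ℝ) : ℂ) • (Xᴴ * S * X) := by
    rw [← hW]
    have : Rᴴ * (V₁ᴴ * S * V₁ + V₂ᴴ * S * V₂) * R
        = (V₁ * R)ᴴ * S * (V₁ * R) + (V₂ * R)ᴴ * S * (V₂ * R) := by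
      simp only [Matrix.conjTranspose_mul]
      noncomm_ring
    rw [this, ← hSR, ← hYR, hSH, hSS, Matrix.one_mul]
    congr 1
    rw [Matrix.conjTranspose_smul, hc]
    simp only [Matrix.smul_mul, Matrix.mul_smul, smul_smul, Complex.star_def]
    rw [mul_comm]
  have hM : (1 : Matrix (Fin n) (Fin n) ℂ) + ((Complex.normSq η : ℝ) : ℂ) • (S * Xᴴ * S * X)
      = S * (Rᴴ * W * R) := by
    rw [hRWR, Matrix.mul_add, hSS, Matrix.mul_smul]
    congr 2
    simp [Matrix.mul_assoc]
  -- invertibility bits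
  have hRH : IsUnit (Rᴴ).det := by
    rw [Matrix.det_conjTranspose]
    exact hR.star
  have hSunit : IsUnit S.det := Matrix.isUnit_det_of_right_inverse hSS
  have hMinv : ((1 : Matrix (Fin n) (Fin n) ℂ)
        + ((Complex.normSq η : ℝ) : ℂ) • (S * Xᴴ * S * X))⁻¹
      = R⁻¹ * W⁻¹ * (Rᴴ)⁻¹ * S := by
    apply Matrix.inv_eq_right_inv
    rw [hM]
    calc S * (Rᴴ * W * R) * (R⁻¹ * W⁻¹ * (Rᴴ)⁻¹ * S)
        = S * (Rᴴ * (W * (R * (R⁻¹ * (W⁻¹ * ((Rᴴ)⁻¹ * S)))))) := by noncomm_ring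
      _ = 1 := by
          rw [Matrix.mul_nonsing_inv_cancel_left R _ hR,
            Matrix.mul_nonsing_inv_cancel_left W _ hinv,
            Matrix.mul_nonsing_inv_cancel_left Rᴴ _ hRH, hSS]
  have hV1Heq : (Rᴴ)⁻¹ * S = V₁ᴴ := by
    have h1 : Rᴴ * V₁ᴴ = S := by
      rw [← Matrix.conjTranspose_mul, ← hSR, hSH]
    rw [← h1, ← Matrix.mul_assoc, Matrix.nonsing_inv_mul _ hRH, Matrix.one_mul]
  rw [hYR, hMinv]
  calc V₂ * R * (R⁻¹ * W⁻¹ * (Rᴴ)⁻¹ * S)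
      = V₂ * (R * R⁻¹) * (W⁻¹ * ((Rᴴ)⁻¹ * S)) := by noncomm_ring
    _ = V₂ * W⁻¹ * V₁ᴴ := by
        rw [Matrix.mul_nonsing_inv _ hR, Matrix.mul_one, hV1Heq, Matrix.mul_assoc]
end

section
/- Let Σ be a signature matrix and let X ∈ K^{n×n} be Σ-self-adjoint and invertible with generalized polar decomposition X = WS (W^{⋆_Σ}W = I, S Σ-self-adjoint). Then for any nonzero μ, the scaled Newton iterate (1/2)(μX + μ⁻¹ΣX^{−*}Σ) equals W·(1/2)(μS + μ⁻¹S⁻¹). -/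
open Matrix

/-- For `Σ`-self-adjoint invertible `X = W S` (with `W` a
`Σ`-automorphism and `S` `Σ`-self-adjoint), the scaled Newton iterate satisfies
`(1/2)(μX + μ⁻¹ Σ X⁻ᴴ Σ) = W (1/2)(μS + μ⁻¹ S⁻¹)`. -/
theorem newton_iterate_factorization {n : ℕ}
    (Sig X W S : Matrix (Fin n) (Fin n) ℂ)
    (hSig : IsSignatureMatrix Sig)
    (hXsa : Sig * Xᴴ * Sig = X)
    (hX : IsUnit X.det)
    (hdec : X = W * S)
    (hW : Sig * Wᴴ * Sig * W = 1)
    (hS : Sig * Sᴴ * Sig = S)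
    (μ : ℂ) (hμ : μ ≠ 0) :
    (1 / 2 : ℂ) • (μ • X + μ⁻¹ • (Sig * (Xᴴ)⁻¹ * Sig)) =
      W * ((1 / 2 : ℂ) • (μ • S + μ⁻¹ • S⁻¹)) := by
  -- Σ² = 1
  have hSig2 : Sig * Sig = 1 := by
    obtain ⟨d, hd, rfl⟩ := hSig
    rw [Matrix.diagonal_mul_diagonal]
    ext i j
    rcases hd i with h | h <;>
      simp [Matrix.diagonal, Matrix.one_apply, h] <;> split <;> norm_num
  have hSigInv : Sig⁻¹ = Sig := Matrix.inv_eq_left_inv hSig2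
  -- invertibility of W and S
  have hWS : IsUnit W.det ∧ IsUnit S.det := by
    rw [hdec, Matrix.det_mul] at hX
    exact ⟨isUnit_of_mul_isUnit_left hX, isUnit_of_mul_isUnit_right hX⟩
  have hWu := hWS.1
  have hSu := hWS.2
  have conj2 : ∀ A : Matrix (Fin n) (Fin n) ℂ, Sig * (Sig * A * Sig) * Sig = A := by
    intro A
    simp only [← Matrix.mul_assoc]
    rw [hSig2, Matrix.one_mul, Matrix.mul_assoc A, hSig2, Matrix.mul_one]
  -- W⁻¹ = Σ Wᴴ Σ
  have hWinv : W⁻¹ = Sig * Wᴴ * Sig := Matrix.inv_eq_left_inv hW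
  have hWH : Wᴴ = Sig * W⁻¹ * Sig := by rw [hWinv, conj2]
  have hSH : Sᴴ = Sig * S * Sig := by
    conv_rhs => rw [← hS, conj2]
  have hWHinv : (Wᴴ)⁻¹ = Sig * W * Sig := by
    rw [hWH, Matrix.mul_inv_rev, Matrix.mul_inv_rev, hSigInv,
      Matrix.nonsing_inv_nonsing_inv W hWu, Matrix.mul_assoc]
  have hSHinv : (Sᴴ)⁻¹ = Sig * S⁻¹ * Sig := by
    rw [hSH, Matrix.mul_inv_rev, Matrix.mul_inv_rev, hSigInv, Matrix.mul_assoc]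
  -- key: Σ (Xᴴ)⁻¹ Σ = W * S⁻¹
  have hkey : Sig * (Xᴴ)⁻¹ * Sig = W * S⁻¹ := by
    have hXH : Xᴴ = Sᴴ * Wᴴ := by rw [hdec, Matrix.conjTranspose_mul]
    rw [hXH, Matrix.mul_inv_rev, hWHinv, hSHinv]
    simp only [← Matrix.mul_assoc]
    rw [hSig2, Matrix.one_mul, Matrix.mul_assoc W Sig Sig, hSig2, Matrix.mul_one,
      Matrix.mul_assoc (W * S⁻¹), hSig2, Matrix.mul_one]
  rw [hkey, hdec, Matrix.mul_smul, Matrix.mul_add, Matrix.mul_smul, Matrix.mul_smul]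
end

section
/- Let Σ be a signature matrix and A ∈ K^{n×n} be Σ-self-adjoint (ΣA*Σ = A) with ΣA Hermitian positive definite. Then all eigenvalues of A are real, and moreover the self-adjoint factor S = (ΣA*ΣA)^{1/2} = (A²)^{1/2} of the generalized polar decomposition of A exists and has only positive real eigenvalues. -/
open Matrix
open scoped ComplexOrder
open scoped MatrixOrder

/-- Spectrum of a Hermitian complex matrix is the range of its (real) eigenvalues. -/
lemma herm_spectrum_eq {n : ℕ} {B : Matrix (Fin n) (Fin n) ℂ} (hB : B.IsHermitian) :
    spectrum ℂ B = Set.range (fun i => (hB.eigenvalues i : ℂ)) := by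
  conv_lhs => rw [hB.spectral_theorem, Unitary.conjStarAlgAut_apply, Unitary.spectrum_star_right_conjugate]
  rw [spectrum_diagonal]
  rfl

/-- Conjugation multiplicativity. -/
lemma conj_mul_conj {α : Type*} [Ring α] (P Q X Y : α) (h : Q * P = 1) :
    (P * X * Q) * (P * Y * Q) = P * (X * Y) * Q := by
  have e : (P * X * Q) * (P * Y * Q) = P * X * ((Q * P) * (Y * Q)) := by
    simp only [mul_assoc]
  rw [e, h, one_mul]
  simp only [mul_assoc]

/-- For a definite pseudosymmetric matrix `A` (`Σ Aᴴ Σ = A` with `Σ A`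
Hermitian positive definite), all eigenvalues of `A` are real, and the self-adjoint
factor `S = (Σ Aᴴ Σ A)^{1/2} = (A²)^{1/2}` of the generalized polar decomposition
exists and has only positive real eigenvalues. -/
theorem definite_pseudosymmetric_real_spectrum {n : ℕ}
    (Sig A : Matrix (Fin n) (Fin n) ℂ)
    (hSig : IsSignatureMatrix Sig)
    (hA : Sig * Aᴴ * Sig = A)
    (hpos : (Sig * A).PosDef) :
    (∀ lam ∈ spectrum ℂ A, lam.im = 0) ∧
      ∃ S : Matrix (Fin n) (Fin n) ℂ,
        S * S = Sig * Aᴴ * Sig * A ∧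
        S * S = A * A ∧
        ∀ mu ∈ spectrum ℂ S, mu.im = 0 ∧ 0 < mu.re := by
  obtain ⟨d, hd, rfl⟩ := hSig
  set Sig := (Matrix.diagonal fun i => (d i : ℂ)) with hSigdef
  have hSig2 : Sig * Sig = 1 := by
    have hfun : (fun i => (d i : ℂ) * (d i : ℂ)) = fun _ => (1 : ℂ) := by
      funext i
      rcases hd i with h | h <;> simp [h]
    rw [hSigdef, Matrix.diagonal_mul_diagonal, hfun, Matrix.diagonal_one]
  have hSigH : Sigᴴ = Sig := by
    have hstar : (star fun i => ((d i : ℂ))) = fun i => ((d i : ℂ)) := by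
      funext i
      simp [Complex.star_def, Complex.conj_ofReal]
    rw [hSigdef, Matrix.diagonal_conjTranspose, hstar]
  -- H = Sig * A, R = sqrt H
  set H := Sig * A with hHdef
  have hHinv : IsUnit H.det := isUnit_iff_ne_zero.mpr (ne_of_gt hpos.det_pos)
  set R := CFC.sqrt H with hRdef
  have hRR : R * R = H := CFC.sqrt_mul_sqrt_self H hpos.posSemidef.nonneg
  have hRH : R.IsHermitian := (CFC.sqrt_nonneg H).posSemidef.1
  have hRinv : IsUnit R.det := by
    have hdet : R.det * R.det = H.det := by rw [← Matrix.det_mul, hRR]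
    refine isUnit_iff_ne_zero.mpr fun h => ?_
    rw [h, mul_zero] at hdet
    exact hHinv.ne_zero hdet.symm
  have hRmul : R⁻¹ * R = 1 := Matrix.nonsing_inv_mul R hRinv
  have hRmul' : R * R⁻¹ = 1 := Matrix.mul_nonsing_inv R hRinv
  have hASigH : A = Sig * H := by rw [hHdef, ← mul_assoc, hSig2, one_mul]
  -- M = R * Sig * R is Hermitian, and A = R⁻¹ * M * R
  set M := R * Sig * R with hMdef
  have hMH : M.IsHermitian := by
    unfold Matrix.IsHermitian
    rw [hMdef, Matrix.conjTranspose_mul, Matrix.conjTranspose_mul, hSigH, hRH, mul_assoc]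
  have hAconj : R⁻¹ * M * R = A := by
    rw [hMdef, hASigH, ← mul_assoc, ← mul_assoc, hRmul, one_mul, mul_assoc, hRR]
  obtain ⟨u, hu⟩ := (Matrix.isUnit_iff_isUnit_det R).mpr hRinv
  have hui : (↑u⁻¹ : Matrix (Fin n) (Fin n) ℂ) = R⁻¹ := by
    rw [Matrix.coe_units_inv, hu]
  have hspec : ∀ X : Matrix (Fin n) (Fin n) ℂ,
      spectrum ℂ (R⁻¹ * X * R) = spectrum ℂ X := by
    intro X
    rw [show R⁻¹ * X * R = ↑u⁻¹ * X * ↑u by rw [hui, hu],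
      spectrum.units_conjugate']
  -- M is invertible
  have hSiginv : IsUnit Sig.det := by
    have h1 : Sig.det * Sig.det = 1 := by rw [← Matrix.det_mul, hSig2, Matrix.det_one]
    exact IsUnit.of_mul_eq_one _ h1
  have hMinv : IsUnit M.det := by
    rw [hMdef, Matrix.det_mul, Matrix.det_mul]
    exact (hRinv.mul hSiginv).mul hRinv
  -- M * M = Mᴴ * M is PosSemidef
  have hM2 : M * M = Mᴴ * M := by rw [hMH]
  have hM2psd : (M * M).PosSemidef := hM2 ▸ Matrix.posSemidef_conjTranspose_mul_self M
  set T := CFC.sqrt (M * M) with hTdef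
  have hTT : T * T = M * M := CFC.sqrt_mul_sqrt_self (M * M) hM2psd.nonneg
  have hTH : T.IsHermitian := (CFC.sqrt_nonneg (M * M)).posSemidef.1
  have hTpsd : T.PosSemidef := (CFC.sqrt_nonneg (M * M)).posSemidef
  have hTinv : IsUnit T := by
    rw [Matrix.isUnit_iff_isUnit_det]
    have h1 : T.det * T.det = (M * M).det := by rw [← Matrix.det_mul, hTT]
    have h2 : IsUnit ((M * M).det) := by rw [Matrix.det_mul]; exact hMinv.mul hMinv
    refine isUnit_iff_ne_zero.mpr fun h => ?_
    rw [h, mul_zero] at h1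
    exact h2.ne_zero h1.symm
  -- key algebra: (R⁻¹ * T * R)² = A²
  have hSS : (R⁻¹ * T * R) * (R⁻¹ * T * R) = A * A := by
    rw [conj_mul_conj _ _ _ _ hRmul', hTT, ← conj_mul_conj _ _ _ _ hRmul', hAconj]
  constructor
  · intro lam hlam
    rw [← hAconj, hspec, herm_spectrum_eq hMH] at hlam
    obtain ⟨i, hi⟩ := hlam
    simp only at hi
    rw [← hi]
    simp
  · refine ⟨R⁻¹ * T * R, ?_, hSS, ?_⟩
    · rw [hA]; exact hSS
    · intro mu hmu
      rw [hspec, herm_spectrum_eq hTH] at hmu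
      obtain ⟨i, hi⟩ := hmu
      simp only at hi
      have hnn := hTpsd.eigenvalues_nonneg i
      have hne : hTH.eigenvalues i ≠ 0 := by
        intro h0
        have hmem : (0 : ℂ) ∈ spectrum ℂ T := by
          rw [herm_spectrum_eq hTH]
          exact ⟨i, by simp [h0]⟩
        exact ((spectrum.zero_mem_iff ℂ).mp hmem) hTinv
      rw [← hi]
      exact ⟨by simp, by simpa using lt_of_le_of_ne hnn (Ne.symm hne)⟩
end
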